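/- Let p be a prime, S ⊆ ℤ, and (u_i), (x_i) two sequences of integers with u_i ∈ S, where (u_i) is a p-ordering of S and x_i ≡ u_i (mod p^{e_k+1}) for 0 ≤ i ≤ k, with p^{e_k} the p-part of k!_S. Then for each 0 ≤ m ≤ k, v_p(∏_{i<m}(x_m − x_i)) = v_p(∏_{i<m}(u_m − u_i)) = v_p(m!_S). -/

import Mathlib

open Polynomial Finset

/-- `p`-adic valuation on ℤ, valued in `ℕ∞` with `vp p 0 = ⊤`. -/
noncomputable def vp (p : ℕ) (x : ℤ) : ℕ∞ :=
  if x = 0 then ⊤ else (padicValInt p x : ℕ∞)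

/-- `u` is a `p`-ordering of `S ⊆ ℤ`. -/
def IsPOrdering (p : ℕ) (S : Set ℤ) (u : ℕ → ℤ) : Prop :=
  (∀ i, u i ∈ S) ∧
  ∀ m, 0 < m → ∀ a ∈ S,
    vp p (∏ i ∈ Finset.range m, (u m - u i)) ≤ vp p (∏ i ∈ Finset.range m, (a - u i))

/-- `e p m` is the exponent of `p` in the Bhargava factorial `m!_S`. -/
def IsFactExp (S : Set ℤ) (e : ℕ → ℕ → ℕ) : Prop :=
  ∀ p : ℕ, p.Prime → ∀ u : ℕ → ℤ, IsPOrdering p S u →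
    ∀ m, (e p m : ℕ∞) = vp p (∏ i ∈ Finset.range m, (u m - u i))

/-- `x 0, …, x k` is a `d_k`-ordering of `S`, where `e` records the exponents of the
Bhargava factorials of `S`. -/
def IsDkOrdering (S : Set ℤ) (d : ℤ) (k : ℕ) (e : ℕ → ℕ → ℕ) (x : ℕ → ℤ) : Prop :=
  ∀ p : ℕ, p.Prime → (p : ℤ) ∣ d →
    ∃ u : ℕ → ℤ, IsPOrdering p S u ∧ ∀ i ≤ k, (p : ℤ) ^ (e p k + 1) ∣ (x i - u i)

/-- `f ∈ Int(S,ℤ)`, i.e. `f` maps `S` into `ℤ`. -/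
def IsIntValued (S : Set ℤ) (f : Polynomial ℚ) : Prop :=
  ∀ a ∈ S, ∃ n : ℤ, f.eval (a : ℚ) = (n : ℚ)

/-- The ring `Int(S,ℤ)` of integer-valued polynomials on `S`, as a subring of `ℚ[X]`. -/
noncomputable def IntPoly (S : Set ℤ) : Subring (Polynomial ℚ) where
  carrier := {f | ∀ a ∈ S, ∃ n : ℤ, f.eval (a : ℚ) = (n : ℚ)}
  mul_mem' := by
    rintro f g hf hg
    intro a ha
    obtain ⟨n, hn⟩ := hf a ha
    obtain ⟨m, hm⟩ := hg a ha
    exact ⟨n * m, by simp [hn, hm]⟩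
  one_mem' := fun a _ => ⟨1, by simp⟩
  add_mem' := by
    rintro f g hf hg
    intro a ha
    obtain ⟨n, hn⟩ := hf a ha
    obtain ⟨m, hm⟩ := hg a ha
    exact ⟨n + m, by simp [hn, hm]⟩
  zero_mem' := fun a _ => ⟨0, by simp⟩
  neg_mem' := by
    rintro f hf a ha
    obtain ⟨n, hn⟩ := hf a ha
    exact ⟨-n, by simp [hn]⟩

/-- `f` is image primitive over `S`: no prime divides `f(a)` for all `a ∈ S`. -/
def IsImagePrimitive (S : Set ℤ) (f : Polynomial ℚ) : Prop :=
  ∀ p : ℕ, p.Prime → ∃ a ∈ S, ∀ n : ℤ, f.eval (a : ℚ) ≠ (p : ℚ) * (n : ℚ)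

/-- `m` is the fixed divisor `d(S,f)` of `f ∈ ℤ[X]` over `S` (gcd of values, up to sign). -/
def IsFixedDivisor (S : Set ℤ) (f : Polynomial ℤ) (m : ℤ) : Prop :=
  (∀ b ∈ S, m ∣ f.eval b) ∧ ∀ n : ℤ, (∀ b ∈ S, n ∣ f.eval b) → n ∣ m


section Helpers

variable {p : ℕ}

lemma vp_ne_top_iff {x : ℤ} : vp p x ≠ ⊤ ↔ x ≠ 0 := by
  unfold vp; split <;> simp_all

lemma vp_dvd_iff (hp : p.Prime) (n : ℕ) (x : ℤ) :
    (p : ℤ) ^ n ∣ x ↔ (n : ℕ∞) ≤ vp p x := by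
  haveI : Fact p.Prime := ⟨hp⟩
  unfold vp
  split
  · simp_all
  · rename_i hx
    rw [padicValInt_dvd_iff]
    simp [hx, Nat.cast_le]

lemma vp_mul (hp : p.Prime) {a b : ℤ} (ha : a ≠ 0) (hb : b ≠ 0) :
    vp p (a * b) = vp p a + vp p b := by
  haveI : Fact p.Prime := ⟨hp⟩
  unfold vp
  simp [ha, hb, mul_ne_zero ha hb, padicValInt.mul ha hb]

lemma vp_prod (hp : p.Prime) {ι : Type*} (s : Finset ι) (f : ι → ℤ)
    (h : ∀ i ∈ s, f i ≠ 0) :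
    vp p (∏ i ∈ s, f i) = ∑ i ∈ s, vp p (f i) := by
  classical
  induction s using Finset.induction with
  | empty => simp [vp]
  | @insert j s hj ih =>
    rw [Finset.prod_insert hj, Finset.sum_insert hj,
      vp_mul hp (h j (Finset.mem_insert_self j s))
        (Finset.prod_ne_zero_iff.mpr fun i hi => h i (Finset.mem_insert_of_mem hi)),
      ih fun i hi => h i (Finset.mem_insert_of_mem hi)]

lemma vp_add_lt (hp : p.Prime) {a b : ℤ} (h : vp p a < vp p b) :
    vp p (a + b) = vp p a := by
  have ha : a ≠ 0 := vp_ne_top_iff.mp (h.trans_le le_top).ne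
  have hva : vp p a = (padicValInt p a : ℕ∞) := by unfold vp; simp [ha]
  set n := padicValInt p a with hn
  have hpa : (p : ℤ) ^ n ∣ a := (vp_dvd_iff hp n a).mpr hva.ge
  have hpb : (p : ℤ) ^ (n + 1) ∣ b := by
    rw [vp_dvd_iff hp]
    have : ((n : ℕ∞) + 1) ≤ vp p b := Order.add_one_le_of_lt (hva ▸ h)
    simpa using this
  have hna : ¬ (p : ℤ) ^ (n + 1) ∣ a := by
    intro hd
    have := (vp_dvd_iff hp (n + 1) a).mp hd
    rw [hva, Nat.cast_le] at this
    omega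
  have hdvd : (p : ℤ) ^ n ∣ a + b := dvd_add hpa (dvd_trans (pow_dvd_pow _ n.le_succ) hpb)
  have hndvd : ¬ (p : ℤ) ^ (n + 1) ∣ a + b := fun hd =>
    hna (by simpa using dvd_sub hd hpb)
  have hab : a + b ≠ 0 := fun h0 => hndvd (h0 ▸ dvd_zero _)
  have hvab : vp p (a + b) = (padicValInt p (a + b) : ℕ∞) := by unfold vp; simp [hab]
  rw [hvab, hva]
  norm_cast
  refine Nat.le_antisymm ?_ ?_
  · by_contra hlt
    exact hndvd ((vp_dvd_iff hp (n + 1) (a + b)).mpr (by rw [hvab, Nat.cast_le]; omega))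
  · have := (vp_dvd_iff hp n (a + b)).mp hdvd
    rwa [hvab, Nat.cast_le] at this

end Helpers

/-- if `u` is a `p`-ordering of `S` and `x i ≡ u i (mod p^{e_k + 1})` for
`i ≤ k`, then `v_p(∏_{i<m}(x m − x i)) = v_p(∏_{i<m}(u m − u i)) = v_p(m!_S)` for `m ≤ k`. -/
theorem stmt17 (p : ℕ) (hp : p.Prime) (S : Set ℤ) (k : ℕ)
    (e : ℕ → ℕ → ℕ) (he : IsFactExp S e)
    (u : ℕ → ℤ) (hu : IsPOrdering p S u)
    (x : ℕ → ℤ) (hx : ∀ i ≤ k, (p : ℤ) ^ (e p k + 1) ∣ (x i - u i)) :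
    ∀ m ≤ k,
      vp p (∏ i ∈ Finset.range m, (x m - x i)) =
        vp p (∏ i ∈ Finset.range m, (u m - u i)) ∧
      vp p (∏ i ∈ Finset.range m, (u m - u i)) = (e p m : ℕ∞) := by
  intro m hm
  have heu := (he p hp u hu m).symm
  have hPu_ne : (∏ i ∈ Finset.range m, (u m - u i)) ≠ 0 :=
    vp_ne_top_iff.mp (by rw [heu]; exact (ENat.coe_ne_top _))
  have hfac : ∀ i ∈ Finset.range m, u m - u i ≠ 0 := fun i hi =>
    Finset.prod_ne_zero_iff.mp hPu_ne i hi
  have heuk := (he p hp u hu k).symm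
  have hPk_ne : (∏ i ∈ Finset.range k, (u k - u i)) ≠ 0 :=
    vp_ne_top_iff.mp (by rw [heuk]; exact (ENat.coe_ne_top _))
  have hfack : ∀ i ∈ Finset.range k, u k - u i ≠ 0 := fun i hi =>
    Finset.prod_ne_zero_iff.mp hPk_ne i hi
  have hmono : (e p m : ℕ∞) ≤ (e p k : ℕ∞) := by
    rcases Nat.eq_zero_or_pos m with hm0 | hm0
    · subst hm0
      have : (e p 0 : ℕ∞) = 0 := by
        rw [he p hp u hu 0]; simp [vp]
      rw [this]; exact zero_le
    · have h1 : vp p (∏ i ∈ Finset.range m, (u m - u i)) ≤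
          vp p (∏ i ∈ Finset.range m, (u k - u i)) := hu.2 m hm0 (u k) (hu.1 k)
      have hfack' : ∀ i ∈ Finset.range m, u k - u i ≠ 0 := fun i hi =>
        hfack i (Finset.mem_range.mpr ((Finset.mem_range.mp hi).trans_le hm))
      have h2 : vp p (∏ i ∈ Finset.range m, (u k - u i)) ≤
          vp p (∏ i ∈ Finset.range k, (u k - u i)) := by
        rw [vp_prod hp _ _ hfack', vp_prod hp _ _ hfack]
        exact Finset.sum_le_sum_of_subset (Finset.range_subset_range.mpr hm)
      calc (e p m : ℕ∞) = _ := he p hp u hu m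
        _ ≤ _ := h1
        _ ≤ _ := h2
        _ = (e p k : ℕ∞) := heuk
  have hfacle : ∀ i ∈ Finset.range m, vp p (u m - u i) ≤ (e p m : ℕ∞) := by
    intro i hi
    rw [he p hp u hu m, vp_prod hp _ _ hfac]
    exact Finset.single_le_sum (f := fun i => vp p (u m - u i)) (fun _ _ => zero_le) hi
  have hsame : ∀ i ∈ Finset.range m, vp p (x m - x i) = vp p (u m - u i) := by
    intro i hi
    have hi' : i ≤ k := ((Finset.mem_range.mp hi).le.trans hm)
    have hc : (p : ℤ) ^ (e p k + 1) ∣ ((x m - u m) - (x i - u i)) :=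
      dvd_sub (hx m hm) (hx i hi')
    have hvc : ((e p k + 1 : ℕ) : ℕ∞) ≤ vp p ((x m - u m) - (x i - u i)) :=
      (vp_dvd_iff hp _ _).mp hc
    have hlt : vp p (u m - u i) < vp p ((x m - u m) - (x i - u i)) := by
      refine lt_of_le_of_lt ((hfacle i hi).trans hmono) (lt_of_lt_of_le ?_ hvc)
      exact_mod_cast Nat.lt_succ_self _
    have hrw : x m - x i = (u m - u i) + ((x m - u m) - (x i - u i)) := by ring
    rw [hrw, vp_add_lt hp hlt]
  have hxfac : ∀ i ∈ Finset.range m, x m - x i ≠ 0 := by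
    intro i hi
    have h1 : vp p (x m - x i) ≠ ⊤ := by
      rw [hsame i hi]; exact vp_ne_top_iff.mpr (hfac i hi)
    exact vp_ne_top_iff.mp h1
  constructor
  · rw [vp_prod hp _ _ hxfac, vp_prod hp _ _ hfac]
    exact Finset.sum_congr rfl hsame
  · exact heu
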